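/- With notation as in the context, there exists a real number L such that R·C = L·Q(g,R) (equality of (0,6)-tensors) if and only if μ = 0, or a = 0, b = 0 and c² + k̃ = 0; and in the latter case R·C = 0. In particular, if k̃ > 0 then such an L exists if and only if μ = 0. (This is the pointwise algebraic form of the theorem characterizing Wintgen ideal submanifolds whose tensors R·C and Q(g,R) are linearly dependent.) -/

import Mathlib

noncomputable section

namespace Wintgen

/-- The standard inner product `g` on `ℝ^n`. -/
def gg (n : ℕ) (x y : Fin n → ℝ) : ℝ := ∑ i, x i * y i

/-- The standard orthonormal basis vectors `E_i` (0-indexed). -/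
def E (n : ℕ) (i : Fin n) : Fin n → ℝ := fun j => if j = i then 1 else 0

/-- Auxiliary: the `j`-th coordinate of `x` (0 if out of range). -/
def coord (n : ℕ) (x : Fin n → ℝ) (j : ℕ) : ℝ := if h : j < n then x ⟨j, h⟩ else 0

/-- The Choi–Lu shape operator `A_1`. -/
def A1 (n : ℕ) (a μ : ℝ) (x : Fin n → ℝ) : Fin n → ℝ := fun i =>
  if (i : ℕ) = 0 then a * x i + μ * coord n x 1
  else if (i : ℕ) = 1 then μ * coord n x 0 + a * x i
  else a * x i

/-- The Choi–Lu shape operator `A_2`. -/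
def A2 (n : ℕ) (b μ : ℝ) (x : Fin n → ℝ) : Fin n → ℝ := fun i =>
  if (i : ℕ) = 0 then (b + μ) * x i
  else if (i : ℕ) = 1 then (b - μ) * x i
  else b * x i

/-- The Choi–Lu shape operator `A_3 = c • id`. -/
def A3 (n : ℕ) (c : ℝ) (x : Fin n → ℝ) : Fin n → ℝ := fun i => c * x i

/-- The Gauss-equation curvature tensor `R`. -/
def Rt (n : ℕ) (a b c μ k : ℝ) (X Y Z W : Fin n → ℝ) : ℝ :=
  (gg n (A1 n a μ X) W * gg n (A1 n a μ Y) Z - gg n (A1 n a μ X) Z * gg n (A1 n a μ Y) W)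
  + (gg n (A2 n b μ X) W * gg n (A2 n b μ Y) Z - gg n (A2 n b μ X) Z * gg n (A2 n b μ Y) W)
  + (gg n (A3 n c X) W * gg n (A3 n c Y) Z - gg n (A3 n c X) Z * gg n (A3 n c Y) W)
  + k * (gg n X W * gg n Y Z - gg n X Z * gg n Y W)

/-- The Ricci tensor `Ricc(X,Y) = ∑ i, R(E_i, X, Y, E_i)`. -/
def Ricc (n : ℕ) (a b c μ k : ℝ) (X Y : Fin n → ℝ) : ℝ :=
  ∑ i, Rt n a b c μ k (E n i) X Y (E n i)

/-- The scalar curvature `τ`. -/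
def tau (n : ℕ) (a b c μ k : ℝ) : ℝ := ∑ i, Ricc n a b c μ k (E n i) (E n i)

/-- The Kulkarni–Nomizu product of two bilinear forms. -/
def KN (n : ℕ) (A B : (Fin n → ℝ) → (Fin n → ℝ) → ℝ) (X1 X2 X3 X4 : Fin n → ℝ) : ℝ :=
  A X1 X4 * B X2 X3 + A X2 X3 * B X1 X4 - A X1 X3 * B X2 X4 - A X2 X4 * B X1 X3

/-- The Weyl conformal curvature tensor `C`. -/
def Ct (n : ℕ) (a b c μ k : ℝ) (X Y Z W : Fin n → ℝ) : ℝ :=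
  Rt n a b c μ k X Y Z W
    - (1 / ((n : ℝ) - 2)) * KN n (gg n) (Ricc n a b c μ k) X Y Z W
    + (tau n a b c μ k / (2 * ((n : ℝ) - 1) * ((n : ℝ) - 2))) * KN n (gg n) (gg n) X Y Z W

/-- The endomorphism `(X ∧_A Y)` applied to `Z`. -/
def wedge (n : ℕ) (A : (Fin n → ℝ) → (Fin n → ℝ) → ℝ) (X Y Z : Fin n → ℝ) : Fin n → ℝ :=
  fun j => A Y Z * X j - A X Z * Y j

/-- The endomorphism determined by `g(Op(X,Y)Z, W) = T(X,Y,Z,W)`: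
its `j`-th component is `T(X,Y,Z,E_j)`. -/
def curvOp (n : ℕ) (T : (Fin n → ℝ) → (Fin n → ℝ) → (Fin n → ℝ) → (Fin n → ℝ) → ℝ)
    (X Y Z : Fin n → ℝ) : Fin n → ℝ := fun j => T X Y Z (E n j)

/-- Derivation-type action of a family of operators on a (0,4)-tensor. -/
def dotT (n : ℕ) (Op : (Fin n → ℝ) → (Fin n → ℝ) → (Fin n → ℝ) → (Fin n → ℝ))
    (T : (Fin n → ℝ) → (Fin n → ℝ) → (Fin n → ℝ) → (Fin n → ℝ) → ℝ)
    (X1 X2 X3 X4 X Y : Fin n → ℝ) : ℝ :=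
  - T (Op X Y X1) X2 X3 X4 - T X1 (Op X Y X2) X3 X4
  - T X1 X2 (Op X Y X3) X4 - T X1 X2 X3 (Op X Y X4)

/-- The (0,6)-tensor `R · C`. -/
def RC (n : ℕ) (a b c μ k : ℝ) :=
  dotT n (fun X Y => curvOp n (Rt n a b c μ k) X Y) (Ct n a b c μ k)

/-- The (0,6)-tensor `C · R`. -/
def CR (n : ℕ) (a b c μ k : ℝ) :=
  dotT n (fun X Y => curvOp n (Ct n a b c μ k) X Y) (Rt n a b c μ k)

/-- The Tachibana tensor `Q(A, T)`. -/
def Q (n : ℕ) (A : (Fin n → ℝ) → (Fin n → ℝ) → ℝ)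
    (T : (Fin n → ℝ) → (Fin n → ℝ) → (Fin n → ℝ) → (Fin n → ℝ) → ℝ) :=
  dotT n (fun X Y => wedge n A X Y) T

section Aux
variable {n : ℕ}

lemma E_apply (i j : Fin n) : E n i j = if j = i then 1 else 0 := rfl

lemma gg_comm (X Y : Fin n → ℝ) : gg n X Y = gg n Y X :=
  Finset.sum_congr rfl fun i _ => mul_comm _ _

lemma gg_E_right (X : Fin n → ℝ) (j : Fin n) : gg n X (E n j) = X j := by
  unfold gg E
  simp

lemma gg_E_left (X : Fin n → ℝ) (j : Fin n) : gg n (E n j) X = X j := by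
  rw [gg_comm, gg_E_right]

lemma coord_lt (X : Fin n → ℝ) (m : ℕ) (h : m < n) : coord n X m = X ⟨m, h⟩ := dif_pos h

lemma sum_split (i0 i1 : Fin n) (hne : i0 ≠ i1) (f g h' : Fin n → ℝ) :
    ∑ i, (f i + ((if i = i0 then g i else 0) + (if i = i1 then h' i else 0)))
      = (∑ i, f i) + (g i0 + h' i1) := by
  rw [Finset.sum_add_distrib, Finset.sum_add_distrib]
  simp

end Aux

/-- plane metric -/
def PP (n : ℕ) (X Y : Fin n → ℝ) : ℝ := coord n X 0 * coord n Y 0 + coord n X 1 * coord n Y 1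
def SS (n : ℕ) (X Y : Fin n → ℝ) : ℝ := coord n X 0 * coord n Y 1 + coord n X 1 * coord n Y 0
def DD (n : ℕ) (X Y : Fin n → ℝ) : ℝ := coord n X 0 * coord n Y 0 - coord n X 1 * coord n Y 1

section Aux2
variable {n : ℕ} {a b c μ k : ℝ}

lemma ggA1 (h2 : 2 ≤ n) (X Y : Fin n → ℝ) :
    gg n (A1 n a μ X) Y = a * gg n X Y + μ * SS n X Y := by
  have h0 : 0 < n := by omega
  have h1 : 1 < n := by omega
  have key : ∀ i : Fin n, A1 n a μ X i * Y i
      = a * (X i * Y i) + ((if i = (⟨0,h0⟩ : Fin n) then μ * coord n X 1 * Y i else 0)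
        + (if i = (⟨1,h1⟩ : Fin n) then μ * coord n X 0 * Y i else 0)) := by
    intro i
    unfold A1
    by_cases hi0 : i = ⟨0, h0⟩
    · subst hi0; simp; ring
    · by_cases hi1 : i = ⟨1, h1⟩
      · subst hi1; simp; ring
      · have v0 : (i : ℕ) ≠ 0 := fun h => hi0 (Fin.ext h)
        have v1 : (i : ℕ) ≠ 1 := fun h => hi1 (Fin.ext h)
        simp [v0, v1, hi0, hi1]; ring
  show (∑ i, A1 n a μ X i * Y i) = _
  rw [Finset.sum_congr rfl (fun i _ => key i), sum_split _ _ (by simp) _ _ _,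
    ← Finset.mul_sum]
  show a * gg n X Y + _ = _
  rw [SS, coord_lt Y 0 h0, coord_lt Y 1 h1]
  ring

lemma ggA2 (h2 : 2 ≤ n) (X Y : Fin n → ℝ) :
    gg n (A2 n b μ X) Y = b * gg n X Y + μ * DD n X Y := by
  have h0 : 0 < n := by omega
  have h1 : 1 < n := by omega
  have key : ∀ i : Fin n, A2 n b μ X i * Y i
      = b * (X i * Y i) + ((if i = (⟨0,h0⟩ : Fin n) then μ * (X i * Y i) else 0)
        + (if i = (⟨1,h1⟩ : Fin n) then -(μ * (X i * Y i)) else 0)) := by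
    intro i
    unfold A2
    by_cases hi0 : i = ⟨0, h0⟩
    · subst hi0; simp; ring
    · by_cases hi1 : i = ⟨1, h1⟩
      · subst hi1; simp; ring
      · have v0 : (i : ℕ) ≠ 0 := fun h => hi0 (Fin.ext h)
        have v1 : (i : ℕ) ≠ 1 := fun h => hi1 (Fin.ext h)
        simp [v0, v1, hi0, hi1]; ring
  show (∑ i, A2 n b μ X i * Y i) = _
  rw [Finset.sum_congr rfl (fun i _ => key i), sum_split _ _ (by simp) _ _ _,
    ← Finset.mul_sum]
  show b * gg n X Y + _ = _
  rw [DD, coord_lt Y 0 h0, coord_lt Y 1 h1, coord_lt X 0 h0, coord_lt X 1 h1]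
  ring

lemma ggA3 (X Y : Fin n → ℝ) : gg n (A3 n c X) Y = c * gg n X Y := by
  show (∑ i, A3 n c X i * Y i) = c * ∑ i, X i * Y i
  rw [Finset.mul_sum]
  exact Finset.sum_congr rfl fun i _ => by unfold A3; ring

lemma Rt_eq (h2 : 2 ≤ n) (X Y Z W : Fin n → ℝ) :
    Rt n a b c μ k X Y Z W =
      (a^2+b^2+c^2+k) * (gg n X W * gg n Y Z - gg n X Z * gg n Y W)
      + a*μ * (gg n X W * SS n Y Z + SS n X W * gg n Y Z
          - gg n X Z * SS n Y W - SS n X Z * gg n Y W)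
      + b*μ * (gg n X W * DD n Y Z + DD n X W * gg n Y Z
          - gg n X Z * DD n Y W - DD n X Z * gg n Y W)
      - 2*μ^2 * (PP n X W * PP n Y Z - PP n X Z * PP n Y W) := by
  unfold Rt
  rw [ggA1 h2, ggA1 h2, ggA1 h2, ggA1 h2, ggA2 h2, ggA2 h2, ggA2 h2, ggA2 h2,
    ggA3, ggA3, ggA3, ggA3]
  unfold PP SS DD
  ring

end Aux2

section Aux3
variable {n : ℕ} {a b c μ k : ℝ}

lemma Ricc_eq (h2 : 2 ≤ n) (X Y : Fin n → ℝ) :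
    Ricc n a b c μ k X Y = (a^2+b^2+c^2+k) * ((n:ℝ) - 1) * gg n X Y
      + ((n:ℝ) - 2) * μ * (a * SS n X Y + b * DD n X Y) - 2 * μ^2 * PP n X Y := by
  have h0 : 0 < n := by omega
  have h1 : 1 < n := by omega
  set X0 := X ⟨0,h0⟩ with hX0
  set X1 := X ⟨1,h1⟩ with hX1
  set Y0 := Y ⟨0,h0⟩ with hY0
  set Y1 := Y ⟨1,h1⟩ with hY1
  have key : ∀ i : Fin n, Rt n a b c μ k (E n i) X Y (E n i) =
      ((a^2+b^2+c^2+k) * gg n X Y + a*μ*(X0*Y1 + X1*Y0) + b*μ*(X0*Y0 - X1*Y1)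
        + (-(a^2+b^2+c^2+k)) * (X i * Y i))
      + ((if i = (⟨0,h0⟩ : Fin n) then
            a*μ*(-(X1 * Y i) - Y1 * X i) + b*μ*(gg n X Y - X0 * Y i - Y0 * X i)
              - 2*μ^2*((X0*Y0 + X1*Y1) - X0*Y0) else 0)
        + (if i = (⟨1,h1⟩ : Fin n) then
            a*μ*(-(X0 * Y i) - Y0 * X i) + b*μ*(-(gg n X Y) + X1 * Y i + Y1 * X i)
              - 2*μ^2*((X0*Y0 + X1*Y1) - X1*Y1) else 0)) := by
    intro i
    rw [Rt_eq h2]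
    unfold PP SS DD
    rw [coord_lt _ 0 h0, coord_lt _ 0 h0, coord_lt _ 1 h1, coord_lt _ 1 h1,
      coord_lt _ 0 h0, coord_lt _ 1 h1]
    simp only [gg_E_left, gg_E_right, E_apply, ← hX0, ← hX1, ← hY0, ← hY1]
    by_cases hi0 : i = ⟨0, h0⟩
    · subst hi0; simp; ring
    · by_cases hi1 : i = ⟨1, h1⟩
      · subst hi1; simp; ring
      · have hi0' : (⟨0,h0⟩ : Fin n) ≠ i := Ne.symm hi0
        have hi1' : (⟨1,h1⟩ : Fin n) ≠ i := Ne.symm hi1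
        simp [hi0, hi1, hi0', hi1']; ring
  unfold Ricc
  rw [Finset.sum_congr rfl (fun i _ => key i), sum_split _ _ (by simp) _ _ _,
    Finset.sum_add_distrib, Finset.sum_const, ← Finset.mul_sum]
  show _ • _ + _ * gg n X Y + _ = _
  unfold PP SS DD
  rw [coord_lt _ 0 h0, coord_lt _ 0 h0, coord_lt _ 1 h1, coord_lt _ 1 h1]
  simp only [Finset.card_univ, Fintype.card_fin, nsmul_eq_mul, ← hX0, ← hX1, ← hY0, ← hY1]
  ring

lemma tau_eq (h2 : 2 ≤ n) :
    tau n a b c μ k = (a^2+b^2+c^2+k) * (n:ℝ) * ((n:ℝ) - 1) - 4 * μ^2 := by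
  have h0 : 0 < n := by omega
  have h1 : 1 < n := by omega
  have key : ∀ i : Fin n, Ricc n a b c μ k (E n i) (E n i) =
      ((a^2+b^2+c^2+k) * ((n:ℝ) - 1))
      + ((if i = (⟨0,h0⟩ : Fin n) then ((n:ℝ)-2)*μ*b - 2*μ^2 else 0)
        + (if i = (⟨1,h1⟩ : Fin n) then -(((n:ℝ)-2)*μ*b) - 2*μ^2 else 0)) := by
    intro i
    rw [Ricc_eq h2]
    unfold PP SS DD
    rw [coord_lt _ 0 h0, coord_lt _ 1 h1]
    simp only [gg_E_left, E_apply]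
    by_cases hi0 : i = ⟨0, h0⟩
    · subst hi0; simp; ring
    · by_cases hi1 : i = ⟨1, h1⟩
      · subst hi1; simp; ring
      · have hi0' : (⟨0,h0⟩ : Fin n) ≠ i := Ne.symm hi0
        have hi1' : (⟨1,h1⟩ : Fin n) ≠ i := Ne.symm hi1
        simp [hi0, hi1, hi0', hi1']
  unfold tau
  rw [Finset.sum_congr rfl (fun i _ => key i), sum_split _ _ (by simp) _ _ _,
    Finset.sum_const]
  simp only [Finset.card_univ, Fintype.card_fin, nsmul_eq_mul]
  ring

end Aux3

section Aux4
variable {n : ℕ} {a b c μ k : ℝ}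

lemma nreal_facts (hn : 4 ≤ n) : ((n:ℝ) - 2) ≠ 0 ∧ ((n:ℝ) - 1) ≠ 0 ∧ (0:ℝ) < (n:ℝ) - 3 := by
  have : (4:ℝ) ≤ (n:ℝ) := by exact_mod_cast hn
  refine ⟨by nlinarith, by nlinarith, by nlinarith⟩

lemma Ct_eq (hn : 4 ≤ n) (X Y Z W : Fin n → ℝ) :
    Ct n a b c μ k X Y Z W = -2*μ^2 * ((PP n X W * PP n Y Z - PP n X Z * PP n Y W)
      - (gg n X W * PP n Y Z + PP n X W * gg n Y Z - gg n X Z * PP n Y W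
          - PP n X Z * gg n Y W) / ((n:ℝ)-2)
      + 2 * (gg n X W * gg n Y Z - gg n X Z * gg n Y W) / (((n:ℝ)-1)*((n:ℝ)-2))) := by
  have h2 : 2 ≤ n := by omega
  obtain ⟨hn2, hn1, -⟩ := nreal_facts hn
  unfold Ct KN
  rw [Rt_eq h2, Ricc_eq h2, Ricc_eq h2, Ricc_eq h2, Ricc_eq h2, tau_eq h2]
  field_simp
  ring

lemma coord_E (m : ℕ) (h : m < n) (j : Fin n) :
    coord n (E n j) m = if j = ⟨m,h⟩ then 1 else 0 := by
  rw [coord_lt _ _ h]; unfold E; simp [eq_comm]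

lemma coord_curvOp (T : (Fin n → ℝ) → (Fin n → ℝ) → (Fin n → ℝ) → (Fin n → ℝ) → ℝ)
    (X Y Z : Fin n → ℝ) (m : ℕ) (h : m < n) :
    coord n (curvOp n T X Y Z) m = T X Y Z (E n ⟨m,h⟩) := by
  rw [coord_lt _ _ h]; rfl

lemma gg_curvOp (h2 : 2 ≤ n) (X Y Z W : Fin n → ℝ) :
    gg n (curvOp n (Rt n a b c μ k) X Y Z) W = Rt n a b c μ k X Y Z W := by
  have h0 : 0 < n := by omega
  have h1 : 1 < n := by omega
  have key : ∀ j : Fin n, Rt n a b c μ k X Y Z (E n j) * W j =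
      (((a^2+b^2+c^2+k) * gg n Y Z + a*μ*SS n Y Z + b*μ*DD n Y Z) * (X j * W j)
        + (-((a^2+b^2+c^2+k) * gg n X Z) - a*μ*SS n X Z - b*μ*DD n X Z) * (Y j * W j))
      + ((if j = (⟨0,h0⟩ : Fin n) then
            (a*μ*(coord n X 1 * gg n Y Z - coord n Y 1 * gg n X Z)
              + b*μ*(coord n X 0 * gg n Y Z - coord n Y 0 * gg n X Z)
              - 2*μ^2*(coord n X 0 * PP n Y Z - coord n Y 0 * PP n X Z)) * W j else 0)
        + (if j = (⟨1,h1⟩ : Fin n) then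
            (a*μ*(coord n X 0 * gg n Y Z - coord n Y 0 * gg n X Z)
              + b*μ*(-(coord n X 1 * gg n Y Z) + coord n Y 1 * gg n X Z)
              - 2*μ^2*(coord n X 1 * PP n Y Z - coord n Y 1 * PP n X Z)) * W j else 0)) := by
    intro j
    rw [Rt_eq h2]
    unfold PP SS DD
    simp only [gg_E_right, coord_E 0 h0, coord_E 1 h1]
    by_cases hj0 : j = ⟨0, h0⟩
    · subst hj0; simp; ring
    · by_cases hj1 : j = ⟨1, h1⟩
      · subst hj1; simp; ring
      · simp [hj0, hj1]; ring
  show (∑ j, Rt n a b c μ k X Y Z (E n j) * W j) = _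
  rw [Finset.sum_congr rfl (fun j _ => key j), sum_split _ _ (by simp) _ _ _,
    Finset.sum_add_distrib, ← Finset.mul_sum, ← Finset.mul_sum]
  rw [Rt_eq h2 X Y Z W]
  unfold PP SS DD
  rw [coord_lt W 0 h0, coord_lt W 1 h1]
  show _ * gg n X W + _ * gg n Y W + _ = _
  ring

lemma gg_curvOp' (h2 : 2 ≤ n) (X Y Z W : Fin n → ℝ) :
    gg n W (curvOp n (Rt n a b c μ k) X Y Z) = Rt n a b c μ k X Y Z W := by
  rw [gg_comm, gg_curvOp h2]

lemma gg_wedge_left (A : (Fin n → ℝ) → (Fin n → ℝ) → ℝ) (X Y Z W : Fin n → ℝ) :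
    gg n (wedge n A X Y Z) W = A Y Z * gg n X W - A X Z * gg n Y W := by
  show (∑ j, (A Y Z * X j - A X Z * Y j) * W j)
      = A Y Z * ∑ j, X j * W j - A X Z * ∑ j, Y j * W j
  rw [Finset.mul_sum, Finset.mul_sum, ← Finset.sum_sub_distrib]
  exact Finset.sum_congr rfl fun j _ => by ring

lemma gg_wedge_right (A : (Fin n → ℝ) → (Fin n → ℝ) → ℝ) (X Y Z W : Fin n → ℝ) :
    gg n W (wedge n A X Y Z) = A Y Z * gg n W X - A X Z * gg n W Y := by
  rw [gg_comm, gg_wedge_left, gg_comm X W, gg_comm Y W]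

lemma coord_wedge (A : (Fin n → ℝ) → (Fin n → ℝ) → ℝ) (X Y Z : Fin n → ℝ) (m : ℕ) :
    coord n (wedge n A X Y Z) m = A Y Z * coord n X m - A X Z * coord n Y m := by
  unfold coord wedge
  split
  · rfl
  · ring

end Aux4

section Aux5
variable {n : ℕ} {a b c μ k : ℝ}

lemma Rt_wedge1 (h2 : 2 ≤ n) (U V Z X2 X3 X4 : Fin n → ℝ) :
    Rt n a b c μ k (wedge n (gg n) U V Z) X2 X3 X4
      = gg n V Z * Rt n a b c μ k U X2 X3 X4 - gg n U Z * Rt n a b c μ k V X2 X3 X4 := by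
  rw [Rt_eq h2, Rt_eq h2, Rt_eq h2]
  unfold PP SS DD
  simp only [gg_wedge_left, gg_wedge_right, coord_wedge]
  ring

lemma Rt_wedge2 (h2 : 2 ≤ n) (U V Z X1 X3 X4 : Fin n → ℝ) :
    Rt n a b c μ k X1 (wedge n (gg n) U V Z) X3 X4
      = gg n V Z * Rt n a b c μ k X1 U X3 X4 - gg n U Z * Rt n a b c μ k X1 V X3 X4 := by
  rw [Rt_eq h2, Rt_eq h2, Rt_eq h2]
  unfold PP SS DD
  simp only [gg_wedge_left, gg_wedge_right, coord_wedge]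
  ring

lemma Rt_wedge3 (h2 : 2 ≤ n) (U V Z X1 X2 X4 : Fin n → ℝ) :
    Rt n a b c μ k X1 X2 (wedge n (gg n) U V Z) X4
      = gg n V Z * Rt n a b c μ k X1 X2 U X4 - gg n U Z * Rt n a b c μ k X1 X2 V X4 := by
  rw [Rt_eq h2, Rt_eq h2, Rt_eq h2]
  unfold PP SS DD
  simp only [gg_wedge_left, gg_wedge_right, coord_wedge]
  ring

lemma Rt_wedge4 (h2 : 2 ≤ n) (U V Z X1 X2 X3 : Fin n → ℝ) :
    Rt n a b c μ k X1 X2 X3 (wedge n (gg n) U V Z)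
      = gg n V Z * Rt n a b c μ k X1 X2 X3 U - gg n U Z * Rt n a b c μ k X1 X2 X3 V := by
  rw [Rt_eq h2, Rt_eq h2, Rt_eq h2]
  unfold PP SS DD
  simp only [gg_wedge_left, gg_wedge_right, coord_wedge]
  ring

lemma Ct_zero (hn : 4 ≤ n) (hμ : μ = 0) (X Y Z W : Fin n → ℝ) :
    Ct n a b c μ k X Y Z W = 0 := by
  rw [Ct_eq hn, hμ]; ring

lemma RC_zero_mu (hn : 4 ≤ n) (hμ : μ = 0) (X1 X2 X3 X4 X Y : Fin n → ℝ) :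
    RC n a b c μ k X1 X2 X3 X4 X Y = 0 := by
  unfold RC dotT
  rw [Ct_zero hn hμ, Ct_zero hn hμ, Ct_zero hn hμ, Ct_zero hn hμ]
  ring

lemma RC_zero_B (hn : 4 ≤ n) (ha : a = 0) (hb : b = 0) (hck : c^2 + k = 0)
    (X1 X2 X3 X4 X Y : Fin n → ℝ) :
    RC n a b c μ k X1 X2 X3 X4 X Y = 0 := by
  have h2 : 2 ≤ n := by omega
  have h0 : 0 < n := by omega
  have h1 : 1 < n := by omega
  have hk : k = -c^2 := by linarith
  subst ha hb hk
  unfold RC dotT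
  simp only [Ct_eq hn, PP, gg_curvOp h2, gg_curvOp' h2,
    coord_curvOp _ _ _ _ 0 h0, coord_curvOp _ _ _ _ 1 h1,
    Rt_eq h2, SS, DD, gg_E_right, coord_E 0 h0, coord_E 1 h1,
    coord_lt _ 0 h0, coord_lt _ 1 h1]
  norm_num [Fin.mk.injEq]
  ring
end Aux5

set_option maxHeartbeats 2000000 in
lemma converse {n : ℕ} {a b c μ k : ℝ} (hn : 4 ≤ n) (hμ : μ ≠ 0) (L : ℝ)
    (hL : ∀ X1 X2 X3 X4 X Y : Fin n → ℝ,
        RC n a b c μ k X1 X2 X3 X4 X Y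
          = L * Q n (gg n) (Rt n a b c μ k) X1 X2 X3 X4 X Y) :
    a = 0 ∧ b = 0 ∧ c ^ 2 + k = 0 := by
  have h2 : 2 ≤ n := by omega
  have h0 : 0 < n := by omega
  have h1 : 1 < n := by omega
  have h2' : 2 < n := by omega
  have h3' : 3 < n := by omega
  obtain ⟨hN2, hN1, hN3⟩ := nreal_facts hn
  have e1 := hL (E n ⟨0,h0⟩) (E n ⟨2,h2'⟩) (E n ⟨0,h0⟩) (E n ⟨1,h1⟩) (E n ⟨0,h0⟩) (E n ⟨2,h2'⟩)
  have e2 := hL (E n ⟨1,h1⟩) (E n ⟨2,h2'⟩) (E n ⟨1,h1⟩) (E n ⟨0,h0⟩) (E n ⟨0,h0⟩) (E n ⟨2,h2'⟩)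
  have e3 := hL (E n ⟨0,h0⟩) (E n ⟨2,h2'⟩) (E n ⟨0,h0⟩) (E n ⟨1,h1⟩) (E n ⟨1,h1⟩) (E n ⟨2,h2'⟩)
  have e4 := hL (E n ⟨0,h0⟩) (E n ⟨2,h2'⟩) (E n ⟨2,h2'⟩) (E n ⟨0,h0⟩) (E n ⟨0,h0⟩) (E n ⟨1,h1⟩)
  have e5 := hL (E n ⟨0,h0⟩) (E n ⟨2,h2'⟩) (E n ⟨1,h1⟩) (E n ⟨2,h2'⟩) (E n ⟨0,h0⟩) (E n ⟨1,h1⟩)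
  have e6 := hL (E n ⟨2,h2'⟩) (E n ⟨3,h3'⟩) (E n ⟨3,h3'⟩) (E n ⟨0,h0⟩) (E n ⟨0,h0⟩) (E n ⟨2,h2'⟩)
  simp only [RC, Q, dotT, Ct_eq hn, PP, gg_curvOp h2, gg_curvOp' h2,
    coord_curvOp (h := h0), coord_curvOp (h := h1),
    Rt_wedge1 h2, Rt_wedge2 h2, Rt_wedge3 h2, Rt_wedge4 h2,
    Rt_eq h2, SS, DD, gg_E_right, gg_E_left, E_apply, coord_E 0 h0, coord_E 1 h1]
    at e1 e2 e3 e4 e5 e6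
  norm_num [Fin.mk.injEq] at e1 e2 e3 e4 e5 e6
  have hμ3 : μ ^ 3 * ((n:ℝ) - 3) ≠ 0 := mul_ne_zero (pow_ne_zero 3 hμ) (ne_of_gt hN3)
  -- a = 0
  have h4' : μ * a * L = 0 := by
    rcases e4 with h | h | h
    · rw [h]; ring
    · rw [h]; ring
    · exact absurd h hμ
  have hD : (μ ^ 3 * ((n:ℝ) - 3)) * (2*((n:ℝ)-2)*((n:ℝ)-1)) ≠ 0 :=
    mul_ne_zero hμ3 (mul_ne_zero (mul_ne_zero two_ne_zero hN2) hN1)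
  have ka : a * ((μ ^ 3 * ((n:ℝ) - 3)) * (2*((n:ℝ)-2)*((n:ℝ)-1))) = 0 := by
    field_simp at e1
    linear_combination (-μ*((n:ℝ)-2)) * e1 - (((n:ℝ)-2)^2*((n:ℝ)-1)) * h4'
  have ha : a = 0 := (mul_eq_zero.mp ka).resolve_right hD
  subst ha
  have h5' : μ * L * b = 0 := by linear_combination (-1/2 : ℝ) * e5
  have kb : b * ((μ ^ 3 * ((n:ℝ) - 3)) * (2*((n:ℝ)-2)*((n:ℝ)-1))) = 0 := by
    field_simp at e2 e3
    linear_combination (-μ*((n:ℝ)-2)/2) * e2 + (μ*((n:ℝ)-2)/2) * e3 - (((n:ℝ)-2)^2*((n:ℝ)-1)) * h5'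
  have hb : b = 0 := (mul_eq_zero.mp kb).resolve_right hD
  subst hb
  refine ⟨rfl, rfl, ?_⟩
  have kck : (c^2 + k) * (μ^2 * (((n:ℝ)-1)^2 * (2*((n:ℝ)-2)^2))) = 0 := by
    field_simp at e6
    linear_combination (-μ*((n:ℝ)-1)*((n:ℝ)-2)^2) * e6
  have hfac2 : (μ^2 * (((n:ℝ)-1)^2 * (2*((n:ℝ)-2)^2))) ≠ 0 :=
    mul_ne_zero (pow_ne_zero 2 hμ)
      (mul_ne_zero (pow_ne_zero 2 hN1) (mul_ne_zero two_ne_zero (pow_ne_zero 2 hN2)))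
  exact (mul_eq_zero.mp kck).resolve_right hfac2


/-- `R·C` and `Q(g,R)` are linearly dependent iff `μ = 0`, or
`a = 0`, `b = 0` and `c² + k̃ = 0`, in which latter case `R·C = 0`;
in particular if `k̃ > 0` this is equivalent to `μ = 0`. -/
theorem statement_7 (n : ℕ) (hn : 4 ≤ n) (a b c μ k : ℝ) :
    ((∃ L : ℝ, ∀ X1 X2 X3 X4 X Y : Fin n → ℝ,
        RC n a b c μ k X1 X2 X3 X4 X Y
          = L * Q n (gg n) (Rt n a b c μ k) X1 X2 X3 X4 X Y)
      ↔ (μ = 0 ∨ (a = 0 ∧ b = 0 ∧ c ^ 2 + k = 0)))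
    ∧ ((a = 0 ∧ b = 0 ∧ c ^ 2 + k = 0) →
        ∀ X1 X2 X3 X4 X Y : Fin n → ℝ, RC n a b c μ k X1 X2 X3 X4 X Y = 0)
    ∧ (0 < k →
      ((∃ L : ℝ, ∀ X1 X2 X3 X4 X Y : Fin n → ℝ,
          RC n a b c μ k X1 X2 X3 X4 X Y
            = L * Q n (gg n) (Rt n a b c μ k) X1 X2 X3 X4 X Y) ↔ μ = 0)) := by
  have main : (∃ L : ℝ, ∀ X1 X2 X3 X4 X Y : Fin n → ℝ,
      RC n a b c μ k X1 X2 X3 X4 X Y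
        = L * Q n (gg n) (Rt n a b c μ k) X1 X2 X3 X4 X Y)
      ↔ (μ = 0 ∨ (a = 0 ∧ b = 0 ∧ c ^ 2 + k = 0)) := by
    constructor
    · rintro ⟨L, hL⟩
      by_cases hμ : μ = 0
      · exact Or.inl hμ
      · exact Or.inr (converse hn hμ L hL)
    · rintro (hμ | ⟨ha, hb, hck⟩)
      · exact ⟨0, fun X1 X2 X3 X4 X Y => by rw [RC_zero_mu hn hμ]; ring⟩
      · exact ⟨0, fun X1 X2 X3 X4 X Y => by rw [RC_zero_B hn ha hb hck]; ring⟩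
  refine ⟨main, fun ⟨ha, hb, hck⟩ X1 X2 X3 X4 X Y => RC_zero_B hn ha hb hck X1 X2 X3 X4 X Y,
    fun hk => main.trans ⟨fun h => ?_, Or.inl⟩⟩
  rcases h with h | ⟨-, -, hck⟩
  · exact h
  · nlinarith [sq_nonneg c]

end Wintgen
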